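/- Let C ⊆ F_q^n be a perfect t-error-correcting code with at least two codewords, i.e., a code of minimum distance 2t+1 satisfying |C| · Σ_{i=0}^{t} binom(n,i)(q−1)^i = q^n. Then the minimum-distance graph G(C) is connected: any two codewords of C are joined by a path of codewords in which consecutive codewords are at Hamming distance exactly 2t+1. -/

import Mathlib

/-- The minimum distance of a code `C ⊆ F^n`. -/
noncomputable def minDist {F : Type*} [Fintype F] [DecidableEq F] {n : ℕ}
    (C : Set (Fin n → F)) : ℕ :=
  sInf {d : ℕ | ∃ x ∈ C, ∃ y ∈ C, x ≠ y ∧ hammingDist x y = d}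

/-- The minimum-distance graph `G(C)`. -/
noncomputable def mdGraph {F : Type*} [Fintype F] [DecidableEq F] {n : ℕ}
    (C : Set (Fin n → F)) : SimpleGraph C where
  Adj x y := x ≠ y ∧ hammingDist (x : Fin n → F) (y : Fin n → F) = minDist C
  symm := by
    constructor
    rintro x y ⟨hxy, hd⟩
    exact ⟨hxy.symm, by rwa [hammingDist_comm]⟩
  loopless := by
    constructor
    rintro x ⟨hxx, -⟩
    exact hxx rfl

open Finset

private lemma sphere_card {F : Type*} [Fintype F] [DecidableEq F] {n : ℕ}
    (x : Fin n → F) (i : ℕ) :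
    (Finset.univ.filter fun y : Fin n → F => hammingDist x y = i).card
      = n.choose i * (Fintype.card F - 1) ^ i := by
  classical
  have hfib : ∀ s ∈ Finset.univ.powersetCard i,
      ((Finset.univ.filter fun y : Fin n → F => hammingDist x y = i).filter
        (fun y => (Finset.univ.filter fun j => x j ≠ y j) = s)).card
        = (Fintype.card F - 1) ^ i := by
    intro s hs
    rw [Finset.mem_powersetCard] at hs
    have hcard : s.card = i := hs.2
    have h1 : ((Finset.univ.filter fun y : Fin n → F => hammingDist x y = i).filter
        (fun y => (Finset.univ.filter fun j => x j ≠ y j) = s))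
        = Finset.univ.filter (fun y : Fin n → F =>
            ∀ j, if j ∈ s then y j ≠ x j else y j = x j) := by
      ext y
      simp only [Finset.mem_filter, Finset.mem_univ, true_and]
      constructor
      · rintro ⟨-, hD⟩ j
        have := Finset.ext_iff.mp hD j
        simp only [Finset.mem_filter, Finset.mem_univ, true_and] at this
        by_cases hj : j ∈ s <;> simp [hj] at this ⊢ <;> tauto
      · intro h
        have hD : (Finset.univ.filter fun j => x j ≠ y j) = s := by
          ext j
          simp only [Finset.mem_filter, Finset.mem_univ, true_and]
          have := h j
          by_cases hj : j ∈ s <;> simp [hj] at this <;> [skip; skip] <;> tauto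
        refine ⟨?_, hD⟩
        rw [hammingDist, hD, hcard]
      done
    rw [h1]
    have h2 : (Finset.univ.filter (fun y : Fin n → F =>
            ∀ j, if j ∈ s then y j ≠ x j else y j = x j)).card
        = Fintype.card {y : Fin n → F // ∀ j, if j ∈ s then y j ≠ x j else y j = x j} := by
      rw [Fintype.card_subtype]
    rw [h2]
    have e : {y : Fin n → F // ∀ j, if j ∈ s then y j ≠ x j else y j = x j}
        ≃ ∀ j : Fin n, {a : F // if j ∈ s then a ≠ x j else a = x j} :=
      Equiv.subtypePiEquivPi (p := fun j a => if j ∈ s then a ≠ x j else a = x j)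
    rw [Fintype.card_congr e, Fintype.card_pi]
    have h3 : ∀ j : Fin n, Fintype.card {a : F // if j ∈ s then a ≠ x j else a = x j}
        = if j ∈ s then Fintype.card F - 1 else 1 := by
      intro j
      by_cases hj : j ∈ s
      · simp only [hj, if_true]
        have : Fintype.card {a : F // ¬ (a = x j)} = Fintype.card F - 1 := by
          rw [Fintype.card_subtype_compl, Fintype.card_subtype_eq]
        simpa using this
      · simp only [hj, if_false]
        simpa using Fintype.card_subtype_eq (x j)
    calc ∏ j, Fintype.card {a : F // if j ∈ s then a ≠ x j else a = x j}
        = ∏ j, (if j ∈ s then Fintype.card F - 1 else 1) := by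
          exact Finset.prod_congr rfl (fun j _ => h3 j)
      _ = (Fintype.card F - 1) ^ i := by
          rw [Finset.prod_ite, Finset.prod_const, Finset.prod_const_one, mul_one,
            Finset.filter_mem_eq_inter, Finset.univ_inter, hcard]
  rw [Finset.card_eq_sum_card_fiberwise (f := fun y : Fin n → F =>
      Finset.univ.filter fun j => x j ≠ y j) (t := Finset.univ.powersetCard i)
      (by
        intro y hy
        rw [Finset.mem_coe, Finset.mem_filter] at hy
        rw [Finset.mem_coe, Finset.mem_powersetCard]
        exact ⟨Finset.subset_univ _, hy.2⟩)]
  rw [Finset.sum_congr rfl hfib, Finset.sum_const, Finset.card_powersetCard,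
    Finset.card_univ, Fintype.card_fin, smul_eq_mul]

private lemma ball_card {F : Type*} [Fintype F] [DecidableEq F] {n t : ℕ}
    (x : Fin n → F) :
    (Finset.univ.filter fun y : Fin n → F => hammingDist x y ≤ t).card
      = ∑ i ∈ Finset.range (t + 1), n.choose i * (Fintype.card F - 1) ^ i := by
  classical
  rw [Finset.card_eq_sum_card_fiberwise (f := fun y : Fin n → F => hammingDist x y)
      (t := Finset.range (t + 1))
      (by intro y hy; rw [Finset.mem_coe, Finset.mem_filter] at hy; rw [Finset.mem_coe, Finset.mem_range]
          show hammingDist x y < t + 1; omega)]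
  refine Finset.sum_congr rfl fun i hi => ?_
  rw [Finset.mem_range] at hi
  rw [Finset.filter_filter, ← sphere_card x i]
  congr 1
  ext y
  simp only [Finset.mem_filter, Finset.mem_univ, true_and]
  constructor
  · rintro ⟨-, h⟩; exact h
  · intro h; exact ⟨by omega, h⟩

private lemma covering {F : Type*} [Fintype F] [DecidableEq F] {n t : ℕ}
    (C : Set (Fin n → F))
    (hmin : minDist C = 2 * t + 1)
    (hperfect : Nat.card C *
        (∑ i ∈ Finset.range (t + 1), n.choose i * (Fintype.card F - 1) ^ i) =
      Fintype.card F ^ n) :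
    ∀ w : Fin n → F, ∃ c ∈ C, hammingDist w c ≤ t := by
  classical
  have hFt : Fintype C := Fintype.ofFinite C
  set CF : Finset (Fin n → F) := C.toFinset with hCF
  have hmem : ∀ c, c ∈ CF ↔ c ∈ C := fun c => Set.mem_toFinset
  have hcardCF : CF.card = Nat.card C := by
    rw [hCF, Set.toFinset_card, Nat.card_eq_fintype_card]
  have hle : ∀ a ∈ C, ∀ b ∈ C, a ≠ b → 2 * t + 1 ≤ hammingDist a b := by
    intro a ha b hb hne
    rw [← hmin]
    exact Nat.sInf_le ⟨a, ha, b, hb, hne, rfl⟩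
  have hdisj : ∀ c1 ∈ CF, ∀ c2 ∈ CF, c1 ≠ c2 →
      Disjoint (Finset.univ.filter fun y : Fin n → F => hammingDist c1 y ≤ t)
        (Finset.univ.filter fun y : Fin n → F => hammingDist c2 y ≤ t) := by
    intro c1 h1 c2 h2 hne
    rw [Finset.disjoint_left]
    intro y hy1 hy2
    rw [Finset.mem_filter] at hy1 hy2
    have htri : hammingDist c1 c2 ≤ hammingDist c1 y + hammingDist y c2 :=
      hammingDist_triangle c1 y c2
    rw [hammingDist_comm y c2] at htri
    have := hle c1 ((hmem c1).mp h1) c2 ((hmem c2).mp h2) hne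
    omega
  set U : Finset (Fin n → F) :=
    CF.biUnion (fun c => Finset.univ.filter fun y => hammingDist c y ≤ t) with hU
  have hUcard : U.card = Fintype.card F ^ n := by
    rw [hU, Finset.card_biUnion hdisj]
    calc ∑ c ∈ CF, (Finset.univ.filter fun y : Fin n → F => hammingDist c y ≤ t).card
        = ∑ _c ∈ CF, ∑ i ∈ Finset.range (t + 1),
            n.choose i * (Fintype.card F - 1) ^ i :=
          Finset.sum_congr rfl fun c _ => ball_card c
      _ = Fintype.card F ^ n := by
          rw [Finset.sum_const, smul_eq_mul, hcardCF, hperfect]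
  have hUuniv : U = Finset.univ := by
    apply Finset.eq_univ_of_card
    rw [hUcard, Fintype.card_fun, Fintype.card_fin]
  intro w
  have hw : w ∈ U := hUuniv ▸ Finset.mem_univ w
  rw [hU, Finset.mem_biUnion] at hw
  obtain ⟨c, hc, hwc⟩ := hw
  rw [Finset.mem_filter] at hwc
  exact ⟨c, (hmem c).mp hc, by rw [hammingDist_comm]; exact hwc.2⟩

/-- The minimum-distance graph of a perfect `t`-error-correcting code (a code
of minimum distance `2t+1` meeting the Hamming bound with equality) is connected; in this graph
consecutive codewords on a path are at Hamming distance exactly `2t+1`. -/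
theorem mdGraph_connected_of_perfect
    {F : Type*} [Fintype F] [DecidableEq F] {n t : ℕ}
    (hq : 2 ≤ Fintype.card F)
    (C : Set (Fin n → F)) (h2 : 2 ≤ Nat.card C)
    (hmin : minDist C = 2 * t + 1)
    (hperfect : Nat.card C *
        (∑ i ∈ Finset.range (t + 1), n.choose i * (Fintype.card F - 1) ^ i) =
      Fintype.card F ^ n) :
    (mdGraph C).Connected := by
  classical
  have hcov := covering C hmin hperfect
  have hle : ∀ a ∈ C, ∀ b ∈ C, a ≠ b → 2 * t + 1 ≤ hammingDist a b := by
    intro a ha b hb hne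
    rw [← hmin]
    exact Nat.sInf_le ⟨a, ha, b, hb, hne, rfl⟩
  have hne : Nonempty C := by
    rcases Nat.card_pos_iff.mp (by omega : 0 < Nat.card C) with ⟨h, -⟩
    exact h
  refine ⟨fun x y => ?_⟩
  -- strong induction on a bound for the Hamming distance
  have key : ∀ d : ℕ, ∀ x y : C, hammingDist (x : Fin n → F) (y : Fin n → F) ≤ d →
      (mdGraph C).Reachable x y := by
    intro d
    induction d using Nat.strong_induction_on with
    | _ d ih =>
      intro x y hdle
      by_cases hxy : x = y
      · exact hxy ▸ SimpleGraph.Reachable.refl x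
      · have hxyne : (x : Fin n → F) ≠ (y : Fin n → F) := fun h => hxy (Subtype.ext h)
        have hD : 2 * t + 1 ≤ hammingDist (x : Fin n → F) (y : Fin n → F) :=
          hle x x.2 y y.2 hxyne
        set D := hammingDist (x : Fin n → F) (y : Fin n → F) with hDdef
        -- pick t+1 coordinates where x and y differ
        have hsub : t + 1 ≤ ({j | (x : Fin n → F) j ≠ (y : Fin n → F) j} :
            Finset (Fin n)).card := by
          rw [show ({j | (x : Fin n → F) j ≠ (y : Fin n → F) j} : Finset (Fin n)).card
              = D from rfl]
          omega
        obtain ⟨S, hSsub, hScard⟩ := Finset.exists_subset_card_eq hsub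
        set w : Fin n → F := fun j => if j ∈ S then (y : Fin n → F) j
          else (x : Fin n → F) j with hw
        have hxw : hammingDist (x : Fin n → F) w = t + 1 := by
          rw [hammingDist]
          rw [show ({j | (x : Fin n → F) j ≠ w j} : Finset (Fin n)) = S from ?_, hScard]
          ext j
          simp only [Finset.mem_filter, Finset.mem_univ, true_and, hw]
          by_cases hj : j ∈ S
          · have := hSsub hj
            simp only [Finset.mem_filter, Finset.mem_univ, true_and] at this
            simp [hj, this]
          · simp [hj]
        have hwy : hammingDist w (y : Fin n → F) = D - (t + 1) := by
          rw [hammingDist]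
          rw [show ({j | w j ≠ (y : Fin n → F) j} : Finset (Fin n))
              = ({j | (x : Fin n → F) j ≠ (y : Fin n → F) j} : Finset (Fin n)) \ S from ?_]
          · rw [Finset.card_sdiff_of_subset hSsub, hScard]; rfl
          · ext j
            simp only [Finset.mem_sdiff, Finset.mem_filter, Finset.mem_univ, true_and, hw]
            by_cases hj : j ∈ S <;> simp [hj]
        obtain ⟨c, hcC, hwc⟩ := hcov w
        have hcx : c ≠ (x : Fin n → F) := by
          intro h
          rw [h, hammingDist_comm] at hwc
          omega
        have hxc : hammingDist (x : Fin n → F) c = 2 * t + 1 := by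
          have h1 : hammingDist (x : Fin n → F) c ≤ hammingDist (x : Fin n → F) w
              + hammingDist w c := hammingDist_triangle _ w _
          have h2 := hle (x : Fin n → F) x.2 c hcC (fun h => hcx h.symm)
          omega
        have hadj : (mdGraph C).Adj x ⟨c, hcC⟩ :=
          ⟨fun h => hcx (congrArg Subtype.val h).symm, by rw [hxc, hmin]⟩
        have hcy : hammingDist c (y : Fin n → F) ≤ d - 1 := by
          have h1 : hammingDist c (y : Fin n → F) ≤ hammingDist c w
              + hammingDist w (y : Fin n → F) := hammingDist_triangle _ w _
          rw [hammingDist_comm c w] at h1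
          omega
        have hd1 : d - 1 < d := by omega
        exact hadj.reachable.trans (ih (d - 1) hd1 ⟨c, hcC⟩ y hcy)
  exact key (hammingDist (x : Fin n → F) (y : Fin n → F)) x y le_rfl
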